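/- arXiv:2111.08332 — 2 statements merged into one kernel-verified Lean document; each statement's English description precedes it below -/
import Mathlib

section
/- Let P_0 be a monic real polynomial of degree n ≥ 1 and P_1 a nonzero real polynomial with deg P_1 < n, such that P_0 and P_1 are coprime and every root of the polynomial P_0 + P_1 has negative real part. For τ ≥ 0 define Δ(λ; τ) = P_0(λ) + P_1(λ) e^{-λτ}. Then the following are equivalent: (i) for every τ ≥ 0, every root λ ∈ ℂ of Δ(·; τ) satisfies Re(λ) < 0 (delay-independent stability); (ii) |P_1(iω)| < |P_0(iω)| for every real ω > 0. -/
open Polynomial Complex Finset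

/-- product lower bound -/
lemma aux_prod_lower (z : ℂ) (a : ℝ) (ha : 0 ≤ a) (s : Multiset ℂ)
    (h : ∀ r ∈ s, a ≤ ‖z - r‖) :
    a ^ (Multiset.card s) ≤ ‖(s.map (fun r => z - r)).prod‖ := by
  induction s using Multiset.induction with
  | empty => simp
  | cons r s ih =>
    simp only [Multiset.map_cons, Multiset.prod_cons, Multiset.card_cons, norm_mul]
    rw [pow_succ]
    have h1 : a ≤ ‖z - r‖ := h r (Multiset.mem_cons_self r s)
    have h2 := ih (fun r' hr' => h r' (Multiset.mem_cons_of_mem hr'))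
    calc a ^ Multiset.card s * a ≤ ‖(s.map (fun r => z - r)).prod‖ * ‖z - r‖ :=
        mul_le_mul h2 h1 ha (norm_nonneg _)
      _ = ‖z - r‖ * ‖(s.map (fun r => z - r)).prod‖ := mul_comm _ _

/-- eval as product over roots for monic complex polynomial -/
lemma aux_eval_prod (q : Polynomial ℂ) (hq : q.Monic) (z : ℂ) :
    q.eval z = ((q.roots.map (fun r => z - r)).prod) := by
  conv_lhs => rw [(IsAlgClosed.splits q).eq_prod_roots_of_monic hq]
  rw [eval_multiset_prod, Multiset.map_map]
  simp

/-- nearest root distance bound -/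
lemma aux_nearest_root (q : Polynomial ℂ) (hq : q.Monic) (hd : 1 ≤ q.natDegree) (z : ℂ) :
    ∃ r, q.eval r = 0 ∧ ‖z - r‖ ^ q.natDegree ≤ ‖q.eval z‖ := by
  have hcard : Multiset.card q.roots = q.natDegree :=
    splits_iff_card_roots.mp (IsAlgClosed.splits q)
  have hne : q.roots.toFinset.Nonempty := by
    rw [Multiset.toFinset_nonempty]
    intro h; rw [h] at hcard; simp at hcard; omega
  obtain ⟨r, hrmem, hrmin⟩ := Finset.exists_min_image q.roots.toFinset
    (fun r => ‖z - r‖) hne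
  refine ⟨r, ?_, ?_⟩
  · exact (mem_roots (hq.ne_zero)).mp (Multiset.mem_toFinset.mp hrmem) 
  · rw [aux_eval_prod q hq z, ← hcard]
    exact aux_prod_lower z _ (norm_nonneg _) q.roots
      (fun r' hr' => hrmin r' (Multiset.mem_toFinset.mpr hr'))

/-- eval upper bound -/
lemma aux_eval_upper (q : Polynomial ℂ) (R : ℝ) (hR : 1 ≤ R) (z : ℂ) (hz : ‖z‖ ≤ R)
    (m : ℕ) (hm : q.natDegree < m) :
    ‖q.eval z‖ ≤ (∑ i ∈ Finset.range m, ‖q.coeff i‖) * R ^ (m-1) := by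
  rw [eval_eq_sum_range' hm]
  calc ‖∑ i ∈ Finset.range m, q.coeff i * z ^ i‖
      ≤ ∑ i ∈ Finset.range m, ‖q.coeff i * z ^ i‖ := by
        exact norm_sum_le _ _
    _ ≤ ∑ i ∈ Finset.range m, ‖q.coeff i‖ * R ^ (m-1) := by
        apply Finset.sum_le_sum
        intro i hi
        rw [norm_mul, norm_pow]
        apply mul_le_mul_of_nonneg_left _ (norm_nonneg _)
        calc ‖z‖ ^ i ≤ R ^ i := by
              apply pow_le_pow_left₀ (norm_nonneg _) hz
          _ ≤ R ^ (m-1) := by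
              apply pow_le_pow_right₀ hR
              have := Finset.mem_range.mp hi
              omega
    _ = (∑ i ∈ Finset.range m, ‖q.coeff i‖) * R ^ (m-1) := by
        rw [← Finset.sum_mul]

/-- Cauchy root bound -/
lemma aux_root_bound (q : Polynomial ℂ) (hq : q.Monic) (hd : 1 ≤ q.natDegree) (z : ℂ)
    (hz : q.eval z = 0) :
    ‖z‖ ≤ 1 + ∑ i ∈ Finset.range q.natDegree, ‖q.coeff i‖ := by
  set n := q.natDegree
  have hsum : (0:ℝ) ≤ ∑ i ∈ Finset.range n, ‖q.coeff i‖ :=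
    Finset.sum_nonneg (fun i _ => norm_nonneg _)
  by_cases h1 : ‖z‖ ≤ 1
  · linarith
  push_neg at h1
  have heval := eval_eq_sum_range (p := q) z
  rw [Finset.sum_range_succ, hq.coeff_natDegree, one_mul, hz] at heval
  have hzn : (z:ℂ) ^ n = -∑ i ∈ Finset.range n, q.coeff i * z ^ i := by
    linear_combination -heval
  have hb : ‖z‖ ^ n ≤ (∑ i ∈ Finset.range n, ‖q.coeff i‖) * ‖z‖ ^ (n-1) := by
    rw [← norm_pow, hzn, norm_neg]
    calc ‖∑ i ∈ Finset.range n, q.coeff i * z ^ i‖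
        ≤ ∑ i ∈ Finset.range n, ‖q.coeff i * z ^ i‖ := norm_sum_le _ _
      _ ≤ ∑ i ∈ Finset.range n, ‖q.coeff i‖ * ‖z‖ ^ (n-1) := by
          apply Finset.sum_le_sum
          intro i hi
          rw [norm_mul, norm_pow]
          apply mul_le_mul_of_nonneg_left _ (norm_nonneg _)
          apply pow_le_pow_right₀ h1.le
          have := Finset.mem_range.mp hi
          omega
      _ = _ := by rw [← Finset.sum_mul]
  have hpow : ‖z‖ ^ n = ‖z‖ ^ (n-1) * ‖z‖ := by
    rw [← pow_succ]
    congr 1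
    omega
  rw [hpow] at hb
  have hpos : (0:ℝ) < ‖z‖ ^ (n-1) := pow_pos (by linarith) _
  nlinarith [mul_le_mul_of_nonneg_right hb (le_of_lt (inv_pos.mpr hpos))]

/-- lower bound when all roots in left half plane -/
lemma aux_lhp_lower (q : Polynomial ℂ) (hq : q.Monic) (δ : ℝ) (hδ : 0 ≤ δ)
    (hroots : ∀ r ∈ q.roots, r.re ≤ -δ) (z : ℂ) (hz : 0 ≤ z.re) :
    δ ^ q.natDegree ≤ ‖q.eval z‖ := by
  have hcard : Multiset.card q.roots = q.natDegree :=
    splits_iff_card_roots.mp (IsAlgClosed.splits q)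
  rw [aux_eval_prod q hq z, ← hcard]
  apply aux_prod_lower z _ hδ
  intro r hr
  calc δ ≤ (z - r).re := by
        have := hroots r hr
        simp only [Complex.sub_re]
        linarith
    _ ≤ |(z-r).re| := le_abs_self _
    _ ≤ ‖z - r‖ := Complex.abs_re_le_norm _


/-- monic eval lower bound -/
lemma aux_monic_lower (q : Polynomial ℂ) (hq : q.Monic) (hd : 1 ≤ q.natDegree) (z : ℂ)
    (hz : 1 ≤ ‖z‖) :
    ‖z‖ ^ q.natDegree
      - (∑ i ∈ Finset.range q.natDegree, ‖q.coeff i‖) * ‖z‖ ^ (q.natDegree - 1)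
      ≤ ‖q.eval z‖ := by
  set n := q.natDegree
  have heval := eval_eq_sum_range (p := q) z
  rw [Finset.sum_range_succ, hq.coeff_natDegree, one_mul] at heval
  have hs : ‖∑ i ∈ Finset.range n, q.coeff i * z ^ i‖
      ≤ (∑ i ∈ Finset.range n, ‖q.coeff i‖) * ‖z‖ ^ (n-1) := by
    calc ‖∑ i ∈ Finset.range n, q.coeff i * z ^ i‖
        ≤ ∑ i ∈ Finset.range n, ‖q.coeff i * z ^ i‖ := norm_sum_le _ _
      _ ≤ ∑ i ∈ Finset.range n, ‖q.coeff i‖ * ‖z‖ ^ (n-1) := by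
          apply Finset.sum_le_sum
          intro i hi
          rw [norm_mul, norm_pow]
          apply mul_le_mul_of_nonneg_left _ (norm_nonneg _)
          apply pow_le_pow_right₀ hz
          have := Finset.mem_range.mp hi
          omega
      _ = _ := by rw [← Finset.sum_mul]
  have hzn : (z:ℂ)^n = q.eval z - ∑ i ∈ Finset.range n, q.coeff i * z ^ i := by
    rw [heval]; ring
  have : ‖z^n‖ ≤ ‖q.eval z‖
      + ‖∑ i ∈ Finset.range n, q.coeff i * z ^ i‖ := by
    rw [hzn]
    calc ‖q.eval z - ∑ i ∈ Finset.range n, q.coeff i * z ^ i‖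
        ≤ ‖q.eval z‖ + ‖-(∑ i ∈ Finset.range n, q.coeff i * z ^ i)‖ := by
          rw [sub_eq_add_neg]; exact norm_add_le _ _
      _ = _ := by rw [norm_neg]
  rw [norm_pow] at this
  linarith

/-- Central lemma: for every μ in the closed unit disk with P0(0)+μP1(0) ≠ 0,
all roots of P0 + μ P1 are in the open left half plane. -/
lemma aux_key (n : ℕ) (hn : 1 ≤ n) (P0 P1 : Polynomial ℝ)
    (hmonic : P0.Monic) (hdeg0 : P0.natDegree = n) (hP1 : P1 ≠ 0)
    (hdeg1 : P1.degree < (n : ℕ))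
    (hP0at0 : aeval (0:ℂ) P0 ≠ 0)
    (h00 : ‖aeval (0:ℂ) P1‖ ≤ ‖aeval (0:ℂ) P0‖)
    (hax : ∀ ω : ℝ, ω ≠ 0 →
      ‖aeval ((ω : ℂ) * Complex.I) P1‖ < ‖aeval ((ω : ℂ) * Complex.I) P0‖)
    (hHurwitz : ∀ z : ℂ, aeval z P0 + aeval z P1 = 0 → z.re < 0) :
    ∀ μ : ℂ, ‖μ‖ ≤ 1 → aeval (0:ℂ) P0 + μ * aeval (0:ℂ) P1 ≠ 0 →
      ∀ z : ℂ, aeval z P0 + μ * aeval z P1 = 0 → z.re < 0 := by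
  classical
  set π0 : Polynomial ℂ := P0.map (algebraMap ℝ ℂ) with hπ0def
  set π1 : Polynomial ℂ := P1.map (algebraMap ℝ ℂ) with hπ1def
  have hπ0monic : π0.Monic := hmonic.map _
  have hπ0deg : π0.natDegree = n := by rw [hπ0def, hmonic.natDegree_map, hdeg0]
  have hπ1ne : π1 ≠ 0 := Polynomial.map_ne_zero hP1
  have hπ1deg : π1.degree < (n : ℕ) := lt_of_le_of_lt (degree_map_le) hdeg1
  have hπ1nat : π1.natDegree < n := (natDegree_lt_iff_degree_lt hπ1ne).mpr hπ1deg
  set Q : ℂ → Polynomial ℂ := fun μ => π0 + C μ * π1 with hQdef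
  have hπ0degeq : π0.degree = (n : ℕ) := by
    rw [← hπ0deg]; exact degree_eq_natDegree hπ0monic.ne_zero
  have hdlt : ∀ μ : ℂ, (C μ * π1).degree < π0.degree := by
    intro μ
    calc (C μ * π1).degree ≤ (C μ).degree + π1.degree := degree_mul_le _ _
      _ ≤ 0 + π1.degree := add_le_add degree_C_le le_rfl
      _ = π1.degree := zero_add _
      _ < (n : ℕ) := hπ1deg
      _ = π0.degree := hπ0degeq.symm
  have hQmonic : ∀ μ : ℂ, (Q μ).Monic := fun μ => hπ0monic.add_of_left (hdlt μ)
  have hQdeg : ∀ μ : ℂ, (Q μ).natDegree = n := by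
    intro μ
    have : (Q μ).degree = (n : ℕ) := by
      rw [hQdef]; simp only []
      rw [degree_add_eq_left_of_degree_lt (hdlt μ), hπ0degeq]
    exact natDegree_eq_of_degree_eq_some this
  have hQeval : ∀ (μ z : ℂ), (Q μ).eval z = aeval z P0 + μ * aeval z P1 := by
    intro μ z
    simp only [hQdef, eval_add, eval_mul, eval_C]
    rw [hπ0def, hπ1def, eval_map_algebraMap, eval_map_algebraMap]
  have hπ1eval : ∀ z : ℂ, π1.eval z = aeval z P1 := fun z => eval_map_algebraMap P1 z
  -- the set S
  set S : Set ℂ := {μ : ℂ | ‖μ‖ ≤ 1 ∧ aeval (0:ℂ) P0 + μ * aeval (0:ℂ) P1 ≠ 0}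
    with hSdef
  have h0S : (0:ℂ) ∈ S := ⟨by simp, by simpa using hP0at0⟩
  have h1S : (1:ℂ) ∈ S := by
    refine ⟨by simp, ?_⟩
    intro h
    rw [one_mul] at h
    have := hHurwitz 0 h
    simp at this
  -- no roots on the imaginary axis for μ ∈ S
  have haxroot : ∀ μ ∈ S, ∀ z : ℂ, (Q μ).eval z = 0 → z.re ≠ 0 := by
    intro μ hμ z hz hre0
    have hzim : z = (z.im : ℂ) * Complex.I := by
      apply Complex.ext <;> simp [hre0]
    by_cases him : z.im = 0
    · rw [him] at hzim
      simp only [Complex.ofReal_zero, zero_mul] at hzim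
      rw [hzim, hQeval] at hz
      exact hμ.2 hz
    · rw [hQeval] at hz
      have habs : ‖aeval z P0‖ = ‖μ‖ * ‖aeval z P1‖ := by
        have : aeval z P0 = -(μ * aeval z P1) := by linear_combination hz
        rw [this, norm_neg, norm_mul]
      have hlt := hax z.im him
      rw [← hzim] at hlt
      have hμ1 : ‖μ‖ ≤ 1 := hμ.1
      nlinarith [norm_nonneg (aeval z P1), norm_nonneg μ,
        norm_nonneg (aeval z P0)]
  -- 1 is "good"
  set good : ℂ → Prop := fun μ => ∀ z : ℂ, (Q μ).eval z = 0 → z.re < 0 with hgooddef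
  have hgood1 : good 1 := by
    intro z hz
    rw [hQeval, one_mul] at hz
    exact hHurwitz z hz
  -- star convexity of S
  have hSstar : StarConvex ℝ (0:ℂ) S := by
    intro y hy a b ha hb hab
    rw [smul_zero, zero_add]
    have hby : (b:ℝ) • y = (b:ℂ) * y := by
      rw [Complex.real_smul]
    rw [hby]
    have hb1 : b ≤ 1 := by linarith
    have habsy : ‖y‖ ≤ 1 := hy.1
    constructor
    · rw [norm_mul, Complex.norm_real, Real.norm_eq_abs, _root_.abs_of_nonneg hb]
      nlinarith
    · intro hzero
      have habs0 : ‖aeval (0:ℂ) P0‖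
          = b * ‖y‖ * ‖aeval (0:ℂ) P1‖ := by
        have : aeval (0:ℂ) P0 = -((b:ℂ) * y * aeval (0:ℂ) P1) := by linear_combination hzero
        rw [this, norm_neg, norm_mul, norm_mul, Complex.norm_real, Real.norm_eq_abs, _root_.abs_of_nonneg hb]
      have hP10 : aeval (0:ℂ) P1 ≠ 0 := by
        intro h10
        rw [h10, norm_zero, mul_zero] at habs0
        exact hP0at0 (norm_eq_zero.mp habs0)
      have hP10pos : 0 < ‖aeval (0:ℂ) P1‖ := norm_pos_iff.mpr hP10
      have hbeq : b * ‖y‖ = 1 := by nlinarith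
      have hb1' : b = 1 := by nlinarith
      have hy1 : ((b:ℝ):ℂ) * y = y := by rw [hb1']; simp
      rw [hy1] at hzero
      exact hy.2 hzero
  have hSpre : IsPreconnected S := by
    have hc : ContractibleSpace S := hSstar.contractibleSpace ⟨0, h0S⟩
    have hp : IsPathConnected S := isPathConnected_iff_pathConnectedSpace.mpr inferInstance
    exact hp.isConnected.isPreconnected
  -- uniform bounds
  set A : ℝ := ∑ i ∈ Finset.range n, ‖π0.coeff i‖ with hAdef
  set B : ℝ := ∑ i ∈ Finset.range n, ‖π1.coeff i‖ with hBdef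
  have hA0 : 0 ≤ A := Finset.sum_nonneg fun i _ => norm_nonneg _
  have hB0 : 0 ≤ B := Finset.sum_nonneg fun i _ => norm_nonneg _
  set R : ℝ := 1 + (A + B) with hRdef
  have hR1 : 1 ≤ R := by rw [hRdef]; linarith
  have hrootR : ∀ μ : ℂ, ‖μ‖ ≤ 1 → ∀ z : ℂ, (Q μ).eval z = 0 → ‖z‖ ≤ R := by
    intro μ hμ z hz
    have h1 := aux_root_bound (Q μ) (hQmonic μ) (by rw [hQdeg]; exact hn) z hz
    rw [hQdeg] at h1
    have h2 : ∑ i ∈ Finset.range n, ‖(Q μ).coeff i‖ ≤ A + B := by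
      rw [hAdef, hBdef, ← Finset.sum_add_distrib]
      apply Finset.sum_le_sum
      intro i _
      have hco : (Q μ).coeff i = π0.coeff i + μ * π1.coeff i := by
        simp [hQdef, coeff_add, coeff_C_mul]
      rw [hco]
      calc ‖π0.coeff i + μ * π1.coeff i‖
          ≤ ‖π0.coeff i‖ + ‖μ * π1.coeff i‖ := norm_add_le _ _
        _ ≤ _ := by
            rw [norm_mul]
            nlinarith [norm_nonneg (π1.coeff i), norm_nonneg μ]
    rw [hRdef]
    linarith
  set M : ℝ := B * R ^ (n-1) with hMdef
  have hM0 : 0 ≤ M := mul_nonneg hB0 (pow_nonneg (by linarith) _)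
  have hMbd : ∀ z : ℂ, ‖z‖ ≤ R → ‖π1.eval z‖ ≤ M :=
    fun z hz => aux_eval_upper π1 R hR1 z hz n hπ1nat
  have hdiff : ∀ (μ ν z : ℂ), (Q μ).eval z - (Q ν).eval z = (μ - ν) * π1.eval z := by
    intro μ ν z
    simp only [hQdef, eval_add, eval_mul, eval_C]
    ring
  -- goodness is open
  have hU : ∀ μ ∈ S, good μ → ∃ ε > 0, ∀ ν ∈ S, ‖ν - μ‖ < ε → good ν := by
    intro μ hμ hg
    have hcard : Multiset.card (Q μ).roots = n := by
      rw [← hQdeg μ]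
      exact splits_iff_card_roots.mp (IsAlgClosed.splits (Q μ))
    have hne : (Q μ).roots.toFinset.Nonempty := by
      rw [Multiset.toFinset_nonempty]
      intro h; rw [h] at hcard; simp at hcard; omega
    obtain ⟨r0, hr0mem, hr0max⟩ :=
      Finset.exists_max_image (Q μ).roots.toFinset (fun r => r.re) hne
    have hr0root : (Q μ).eval r0 = 0 :=
      (mem_roots (hQmonic μ).ne_zero).mp (Multiset.mem_toFinset.mp hr0mem)
    set δ : ℝ := -r0.re with hδdef
    have hδpos : 0 < δ := by
      have := hg r0 hr0root
      rw [hδdef]; linarith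
    refine ⟨δ^n / (M+1), div_pos (pow_pos hδpos n) (by linarith), ?_⟩
    intro ν hν hdist z hz
    by_contra hre
    push_neg at hre
    have hzR : ‖z‖ ≤ R := hrootR ν hν.1 z hz
    have heμ : ‖(Q μ).eval z‖ = ‖μ - ν‖ * ‖π1.eval z‖ := by
      have h5 := hdiff μ ν z
      rw [hz, sub_zero] at h5
      rw [h5, norm_mul]
    have hlow : δ^n ≤ ‖(Q μ).eval z‖ := by
      have h6 : ∀ r ∈ (Q μ).roots, r.re ≤ -δ := by
        intro r hr
        have := hr0max r (Multiset.mem_toFinset.mpr hr)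
        rw [hδdef]; simp only [neg_neg]; exact this
      have := aux_lhp_lower (Q μ) (hQmonic μ) δ hδpos.le h6 z hre
      rwa [hQdeg μ] at this
    have hub : ‖μ - ν‖ * ‖π1.eval z‖ < δ^n := by
      have h1 : ‖μ - ν‖ < δ^n/(M+1) := by
        rw [← neg_sub, norm_neg] at hdist
        exact hdist
      have h2 := hMbd z hzR
      have h3 := norm_nonneg (μ - ν)
      have h4 := norm_nonneg (π1.eval z)
      calc ‖μ - ν‖ * ‖π1.eval z‖
          ≤ ‖μ - ν‖ * (M+1) := by
            apply mul_le_mul_of_nonneg_left (by linarith) h3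
        _ < δ^n/(M+1) * (M+1) := by
            apply mul_lt_mul_of_pos_right h1 (by linarith)
        _ = δ^n := div_mul_cancel₀ _ (by linarith)
    rw [heμ] at hlow
    linarith
  -- badness is open
  have hCop : ∀ μ ∈ S, ¬ good μ → ∃ ε > 0, ∀ ν ∈ S, ‖ν - μ‖ < ε → ¬ good ν := by
    intro μ hμ hg
    rw [hgooddef] at hg
    have hg' : ¬ ∀ z : ℂ, (Q μ).eval z = 0 → z.re < 0 := hg
    push_neg at hg'
    obtain ⟨z0, hz0root, hz0re⟩ := hg'
    have hz0pos : 0 < z0.re := by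
      have := haxroot μ hμ z0 hz0root
      cases lt_or_eq_of_le hz0re with
      | inl h => exact h
      | inr h => exact absurd h.symm this
    set K : ℝ := ‖π1.eval z0‖ with hKdef
    have hK0 : 0 ≤ K := norm_nonneg _
    refine ⟨z0.re^n/(K+1), div_pos (pow_pos hz0pos n) (by linarith), ?_⟩
    intro ν hν hdist hgood
    have he : (Q ν).eval z0 = (ν - μ) * π1.eval z0 := by
      have h5 := hdiff ν μ z0
      rw [hz0root, sub_zero] at h5
      exact h5
    obtain ⟨r, hrroot, hrle⟩ := aux_nearest_root (Q ν) (hQmonic ν) (by rw [hQdeg]; exact hn) z0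
    rw [hQdeg] at hrle
    have hlt : ‖z0 - r‖ ^ n < z0.re ^ n := by
      have h7 : ‖(Q ν).eval z0‖ < z0.re ^ n := by
        rw [he, norm_mul, ← hKdef]
        have h3 := norm_nonneg (ν - μ)
        calc ‖ν - μ‖ * K ≤ ‖ν - μ‖ * (K+1) := by
              apply mul_le_mul_of_nonneg_left (by linarith) h3
          _ < z0.re^n/(K+1) * (K+1) := mul_lt_mul_of_pos_right hdist (by linarith)
          _ = z0.re^n := div_mul_cancel₀ _ (by linarith)
      linarith
    have hltr : ‖z0 - r‖ < z0.re :=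
      lt_of_pow_lt_pow_left₀ n hz0pos.le hlt
    have hrpos : 0 < r.re := by
      have h1 : z0.re - r.re ≤ |(z0-r).re| := by
        rw [Complex.sub_re]
        exact le_abs_self _
      have h2 : |(z0-r).re| ≤ ‖z0 - r‖ := Complex.abs_re_le_norm _
      linarith
    have := hgood r hrroot
    linarith
  -- connectedness argument
  have hgoodall : ∀ μ ∈ S, good μ := by
    by_contra hcon
    push_neg at hcon
    obtain ⟨μbad, hμbadS, hμbad⟩ := hcon
    have hradius : ∀ μ ∈ S, ∃ ε > 0, ∀ ν ∈ S, ‖ν - μ‖ < ε → (good ν ↔ good μ) := by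
      intro μ hμ
      by_cases h : good μ
      · obtain ⟨ε, hε, hb⟩ := hU μ hμ h
        exact ⟨ε, hε, fun ν hν hd => iff_of_true (hb ν hν hd) h⟩
      · obtain ⟨ε, hε, hb⟩ := hCop μ hμ h
        exact ⟨ε, hε, fun ν hν hd => iff_of_false (hb ν hν hd) h⟩
    choose! ε hεpos hεball using hradius
    set Uo : Set ℂ := ⋃ (μ : ℂ) (_ : μ ∈ S ∧ good μ), Metric.ball μ (ε μ) with hUodef
    set Co : Set ℂ := ⋃ (μ : ℂ) (_ : μ ∈ S ∧ ¬ good μ), Metric.ball μ (ε μ) with hCodef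
    have hUoopen : IsOpen Uo := isOpen_iUnion fun μ => isOpen_iUnion fun _ => Metric.isOpen_ball
    have hCoopen : IsOpen Co := isOpen_iUnion fun μ => isOpen_iUnion fun _ => Metric.isOpen_ball
    have hmemball : ∀ μ ∈ S, μ ∈ Metric.ball μ (ε μ) :=
      fun μ hμ => Metric.mem_ball_self (hεpos μ hμ)
    have hcover : S ⊆ Uo ∪ Co := by
      intro μ hμ
      by_cases h : good μ
      · exact Or.inl (Set.mem_iUnion₂.mpr ⟨μ, ⟨hμ, h⟩, hmemball μ hμ⟩)
      · exact Or.inr (Set.mem_iUnion₂.mpr ⟨μ, ⟨hμ, h⟩, hmemball μ hμ⟩)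
    have hUne : (S ∩ Uo).Nonempty :=
      ⟨1, h1S, Set.mem_iUnion₂.mpr ⟨1, ⟨h1S, hgood1⟩, hmemball 1 h1S⟩⟩
    have hCne : (S ∩ Co).Nonempty :=
      ⟨μbad, hμbadS, Set.mem_iUnion₂.mpr ⟨μbad, ⟨hμbadS, hμbad⟩, hmemball μbad hμbadS⟩⟩
    obtain ⟨x, hxS, hxU, hxC⟩ := hSpre Uo Co hUoopen hCoopen hcover hUne hCne
    obtain ⟨μ1, hμ1, hxball1⟩ := Set.mem_iUnion₂.mp hxU
    obtain ⟨μ2, hμ2, hxball2⟩ := Set.mem_iUnion₂.mp hxC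
    have hd1 : ‖x - μ1‖ < ε μ1 := by
      rw [← Complex.dist_eq]
      exact Metric.mem_ball.mp hxball1
    have hd2 : ‖x - μ2‖ < ε μ2 := by
      rw [← Complex.dist_eq]
      exact Metric.mem_ball.mp hxball2
    have hgx : good x := (hεball μ1 hμ1.1 x hxS hd1).mpr hμ1.2
    have hgx2 : good μ2 := (hεball μ2 hμ2.1 x hxS hd2).mp hgx
    exact hμ2.2 hgx2
  intro μ hμabs hμne z hz
  have hgm : good μ := hgoodall μ ⟨hμabs, hμne⟩
  exact hgm z (by rw [hQeval]; exact hz)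

/-- Tsypkin's frequency-sweeping criterion for delay-independent
stability: with `P₀` monic of degree `n ≥ 1`, `P₁ ≠ 0` of degree `< n`, `P₀` and `P₁`
coprime, and `P₀ + P₁` Hurwitz, the quasipolynomial `Δ(λ; τ) = P₀(λ) + P₁(λ)e^{-λτ}`
has all roots in the open left half-plane for every delay `τ ≥ 0` if and only if
`|P₁(iω)| < |P₀(iω)|` for every real `ω > 0`. -/
theorem stmt_14 (n : ℕ) (hn : 1 ≤ n) (P0 P1 : Polynomial ℝ)
    (hmonic : P0.Monic) (hdeg0 : P0.natDegree = n) (hP1 : P1 ≠ 0)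
    (hdeg1 : P1.degree < (n : ℕ)) (hcop : IsCoprime P0 P1)
    (hHurwitz : ∀ z : ℂ, Polynomial.aeval z (P0 + P1) = 0 → z.re < 0) :
    (∀ τ : ℝ, 0 ≤ τ → ∀ lam : ℂ,
        Polynomial.aeval lam P0 + Polynomial.aeval lam P1 * Complex.exp (-lam * (τ : ℂ)) = 0 →
        lam.re < 0)
    ↔ (∀ ω : ℝ, 0 < ω →
        ‖Polynomial.aeval ((ω : ℂ) * Complex.I) P1‖ <
          ‖Polynomial.aeval ((ω : ℂ) * Complex.I) P0‖) := by
  have hconj : ∀ (P : Polynomial ℝ) (z : ℂ),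
      (starRingEnd ℂ) (aeval z P) = aeval ((starRingEnd ℂ) z) P := by
    intro P z
    simpa using (Polynomial.aeval_algHom_apply (Complex.conjAe) z P).symm
  have habsneg : ∀ (P : Polynomial ℝ) (ω : ℝ),
      ‖aeval (((-ω : ℝ) : ℂ) * Complex.I) P‖
        = ‖aeval ((ω:ℂ) * Complex.I) P‖ := by
    intro P ω
    rw [← Complex.norm_conj (aeval ((ω:ℂ) * Complex.I) P), hconj]
    congr 2
    simp [Complex.ext_iff]
  have hnocommon : ∀ z : ℂ, aeval z P0 = 0 → aeval z P1 = 0 → False := by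
    intro z h0 h1
    obtain ⟨u, v, huv⟩ := hcop
    have h2 := congrArg (aeval z) huv
    simp only [map_add, map_mul, map_one, h0, h1, mul_zero, add_zero] at h2
    exact one_ne_zero h2.symm
  have hcontP : ∀ P : Polynomial ℝ,
      Continuous (fun ω : ℝ => ‖aeval ((ω:ℂ) * Complex.I) P‖) := by
    intro P
    apply continuous_norm.comp
    exact (Polynomial.continuous_aeval P).comp (Complex.continuous_ofReal.mul continuous_const)
  have hHurwitz' : ∀ z : ℂ, aeval z P0 + aeval z P1 = 0 → z.re < 0 := by
    intro z h
    apply hHurwitz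
    rw [map_add]
    exact h
  constructor
  · -- (i) → (ii)
    intro hi ω0 hω0
    by_contra hle
    push_neg at hle
    set π0 : Polynomial ℂ := P0.map (algebraMap ℝ ℂ) with hπ0def
    set π1 : Polynomial ℂ := P1.map (algebraMap ℝ ℂ) with hπ1def
    have hπ0monic : π0.Monic := hmonic.map _
    have hπ0deg : π0.natDegree = n := by rw [hπ0def, hmonic.natDegree_map, hdeg0]
    have hπ1ne : π1 ≠ 0 := Polynomial.map_ne_zero hP1
    have hπ1nat : π1.natDegree < n :=
      (natDegree_lt_iff_degree_lt hπ1ne).mpr (lt_of_le_of_lt degree_map_le hdeg1)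
    have hev0 : ∀ z : ℂ, π0.eval z = aeval z P0 := fun z => eval_map_algebraMap P0 z
    have hev1 : ∀ z : ℂ, π1.eval z = aeval z P1 := fun z => eval_map_algebraMap P1 z
    set A : ℝ := ∑ i ∈ Finset.range n, ‖π0.coeff i‖ with hAdef
    set B : ℝ := ∑ i ∈ Finset.range n, ‖π1.coeff i‖ with hBdef
    have hA0 : 0 ≤ A := Finset.sum_nonneg fun i _ => norm_nonneg _
    have hB0 : 0 ≤ B := Finset.sum_nonneg fun i _ => norm_nonneg _
    set W : ℝ := max ω0 (A + B + 1) with hWdef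
    have hW1 : 1 ≤ W := le_trans (by linarith) (le_max_right _ _)
    have hWab : A + B + 1 ≤ W := le_max_right _ _
    have hWω0 : ω0 ≤ W := le_max_left _ _
    have habsWI : ‖(W:ℂ) * Complex.I‖ = W := by
      rw [norm_mul, Complex.norm_real, Real.norm_eq_abs, Complex.norm_I, mul_one, _root_.abs_of_nonneg (by linarith)]
    have hWgap : ‖aeval ((W:ℂ)*Complex.I) P1‖
        < ‖aeval ((W:ℂ)*Complex.I) P0‖ := by
      have hup : ‖π1.eval ((W:ℂ)*Complex.I)‖ ≤ B * W ^ (n-1) := by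
        have := aux_eval_upper π1 W hW1 ((W:ℂ)*Complex.I) (le_of_eq habsWI) n hπ1nat
        rw [← hBdef] at this
        exact this
      have hlo : W^n - A * W^(n-1) ≤ ‖π0.eval ((W:ℂ)*Complex.I)‖ := by
        have h2 := aux_monic_lower π0 hπ0monic (by rw [hπ0deg]; exact hn) ((W:ℂ)*Complex.I)
          (by rw [habsWI]; exact hW1)
        rw [hπ0deg, habsWI, ← hAdef] at h2
        exact h2
      have hWpow : W ^ n = W ^ (n-1) * W := by
        rw [← pow_succ]
        congr 1
        omega
      have hpowpos : (0:ℝ) < W ^ (n-1) := pow_pos (by linarith) _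
      rw [← hev0, ← hev1]
      nlinarith
    set g : ℝ → ℝ := fun ω => ‖aeval ((ω:ℂ)*Complex.I) P0‖
      - ‖aeval ((ω:ℂ)*Complex.I) P1‖ with hgdef
    have hgcont : Continuous g := (hcontP P0).sub (hcontP P1)
    have hmem : (0:ℝ) ∈ Set.Icc (g ω0) (g W) := by
      constructor
      · rw [hgdef]; simp only []; linarith
      · rw [hgdef]; simp only []; linarith
    obtain ⟨ω', hω'mem, hω'eq⟩ := intermediate_value_Icc hWω0 hgcont.continuousOn hmem
    have hω'pos : 0 < ω' := lt_of_lt_of_le hω0 hω'mem.1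
    have heqabs : ‖aeval ((ω':ℂ)*Complex.I) P0‖
        = ‖aeval ((ω':ℂ)*Complex.I) P1‖ := by
      rw [hgdef] at hω'eq
      simp only [] at hω'eq
      linarith
    have h1ne : aeval ((ω':ℂ)*Complex.I) P1 ≠ 0 := by
      intro h
      apply hnocommon ((ω':ℂ)*Complex.I) _ h
      rw [h, norm_zero] at heqabs
      exact norm_eq_zero.mp heqabs
    set c : ℂ := -(aeval ((ω':ℂ)*Complex.I) P0) / aeval ((ω':ℂ)*Complex.I) P1 with hcdef
    have habsc : ‖c‖ = 1 := by
      rw [hcdef, norm_div, norm_neg, heqabs, div_self]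
      exact norm_ne_zero_iff.mpr h1ne
    set θ : ℝ := c.arg with hθdef
    have hexp : Complex.exp ((θ:ℂ) * Complex.I) = c := by
      have h3 := Complex.norm_mul_exp_arg_mul_I c
      rw [habsc] at h3
      simpa using h3
    set τ : ℝ := (2 * Real.pi - θ) / ω' with hτdef
    have hθpi : θ ≤ Real.pi := Complex.arg_le_pi c
    have hτ0 : 0 ≤ τ := div_nonneg (by linarith [Real.pi_pos]) hω'pos.le
    have hωτ : ω' * τ = 2 * Real.pi - θ := by
      rw [hτdef]
      field_simp
    have hexp2 : Complex.exp (-((ω':ℂ)*Complex.I) * (τ:ℂ)) = c := by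
      have hcast : ((ω' * τ : ℝ) : ℂ) = ((2*Real.pi - θ : ℝ) : ℂ) := by
        exact_mod_cast congrArg (fun x : ℝ => (x : ℂ)) hωτ
      push_cast at hcast
      have harg : -((ω':ℂ)*Complex.I) * (τ:ℂ)
          = (θ:ℂ)*Complex.I + -(2*(Real.pi:ℂ)*Complex.I) := by
        linear_combination (-Complex.I) * hcast
      rw [harg, Complex.exp_add, Complex.exp_neg, Complex.exp_two_pi_mul_I, inv_one, mul_one,
        hexp]
    have hroot : aeval ((ω':ℂ)*Complex.I) P0
        + aeval ((ω':ℂ)*Complex.I) P1 * Complex.exp (-((ω':ℂ)*Complex.I) * (τ:ℂ)) = 0 := by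
      rw [hexp2, hcdef]
      field_simp
      ring
    have hfin := hi τ hτ0 ((ω':ℂ)*Complex.I) hroot
    rw [show ((ω':ℂ)*Complex.I).re = 0 from by simp] at hfin
    exact lt_irrefl 0 hfin
  · -- (ii) → (i)
    intro hfreq τ hτ lam heq
    have hax : ∀ ω : ℝ, ω ≠ 0 → ‖aeval ((ω:ℂ)*Complex.I) P1‖
        < ‖aeval ((ω:ℂ)*Complex.I) P0‖ := by
      intro ω hω
      rcases lt_trichotomy ω 0 with h|h|h
      · have h2 := hfreq (-ω) (by linarith)
        have e0 := habsneg P0 (-ω)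
        have e1 := habsneg P1 (-ω)
        simp only [neg_neg] at e0 e1
        rw [e0, e1]
        exact h2
      · exact absurd h hω
      · exact hfreq ω h
    have h00 : ‖aeval (0:ℂ) P1‖ ≤ ‖aeval (0:ℂ) P0‖ := by
      have hc := ((hcontP P0).sub (hcontP P1)).tendsto 0
      simp only [Pi.sub_apply, Complex.ofReal_zero, zero_mul] at hc
      have hg : Filter.Tendsto
          (fun ω : ℝ => ‖aeval ((ω:ℂ)*Complex.I) P0‖
            - ‖aeval ((ω:ℂ)*Complex.I) P1‖)
          (nhdsWithin 0 (Set.Ioi 0))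
          (nhds (‖aeval (0:ℂ) P0‖ - ‖aeval (0:ℂ) P1‖)) :=
        hc.mono_left nhdsWithin_le_nhds
      have hge : (0:ℝ) ≤ ‖aeval (0:ℂ) P0‖ - ‖aeval (0:ℂ) P1‖ :=
        ge_of_tendsto hg (Filter.eventually_of_mem self_mem_nhdsWithin
          (fun ω (hω : ω ∈ Set.Ioi 0) => by
            have := hfreq ω hω
            linarith))
      linarith
    have hP0at0 : aeval (0:ℂ) P0 ≠ 0 := by
      intro h
      rw [h, norm_zero] at h00
      have h10 : aeval (0:ℂ) P1 = 0 :=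
        norm_eq_zero.mp (le_antisymm h00 (norm_nonneg _))
      exact hnocommon 0 h h10
    by_contra hre
    push_neg at hre
    set μ : ℂ := Complex.exp (-lam * (τ:ℂ)) with hμdef
    have hrecomp : (-lam * (τ:ℂ)).re = -(lam.re * τ) := by
      simp [Complex.mul_re]
    have hμabs : ‖μ‖ ≤ 1 := by
      rw [hμdef, Complex.norm_exp, hrecomp]
      calc Real.exp (-(lam.re * τ)) ≤ Real.exp 0 :=
          Real.exp_le_exp.mpr (by nlinarith)
        _ = 1 := Real.exp_zero
    rcases eq_or_lt_of_le hre with h0 | hpos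
    · -- lam.re = 0
      have hlam : lam = (lam.im : ℂ) * Complex.I := by
        apply Complex.ext <;> simp [← h0]
      by_cases him : lam.im = 0
      · have hlam0 : lam = 0 := by rw [hlam, him]; simp
        have hμ1 : μ = 1 := by rw [hμdef, hlam0]; simp
        rw [hlam0, hμ1, mul_one] at heq
        have := hHurwitz' 0 heq
        rw [Complex.zero_re] at this
        exact lt_irrefl 0 this
      · have habs : ‖aeval lam P0‖ = ‖aeval lam P1‖ * ‖μ‖ := by
          have h4 : aeval lam P0 = -(aeval lam P1 * μ) := by linear_combination heq
          rw [h4, norm_neg, norm_mul]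
        have hltax := hax lam.im him
        rw [← hlam] at hltax
        nlinarith [norm_nonneg (aeval lam P1), norm_nonneg (aeval lam P0)]
    · -- 0 < lam.re
      have hroot' : aeval lam P0 + μ * aeval lam P1 = 0 := by linear_combination heq
      have hμne : aeval (0:ℂ) P0 + μ * aeval (0:ℂ) P1 ≠ 0 := by
        intro hc
        by_cases hτz : τ = 0
        · have hμ1 : μ = 1 := by rw [hμdef, hτz]; simp
          rw [hμ1, one_mul] at hc
          have := hHurwitz' 0 hc
          rw [Complex.zero_re] at this
          exact lt_irrefl 0 this
        · have hτpos : 0 < τ := lt_of_le_of_ne hτ (Ne.symm hτz)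
          have hμlt : ‖μ‖ < 1 := by
            rw [hμdef, Complex.norm_exp, hrecomp]
            have h5 : 0 < lam.re * τ := mul_pos hpos hτpos
            calc Real.exp (-(lam.re*τ)) < Real.exp 0 := Real.exp_lt_exp.mpr (by linarith)
              _ = 1 := Real.exp_zero
          have habs0 : ‖aeval (0:ℂ) P0‖
              = ‖μ‖ * ‖aeval (0:ℂ) P1‖ := by
            have h6 : aeval (0:ℂ) P0 = -(μ * aeval (0:ℂ) P1) := by linear_combination hc
            rw [h6, norm_neg, norm_mul]
          by_cases h10 : aeval (0:ℂ) P1 = 0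
          · rw [h10, norm_zero, mul_zero] at habs0
            exact hP0at0 (norm_eq_zero.mp habs0)
          · have := norm_pos_iff.mpr h10
            nlinarith
      have := aux_key n hn P0 P1 hmonic hdeg0 hP1 hdeg1 hP0at0 h00 hax hHurwitz'
        μ hμabs hμne lam hroot'
      linarith
end

section
/- Let a_0 < 0 and 0 < τ < sqrt(-2/a_0). Define λ_+ = (-2 + sqrt(2 - a_0 τ^2)) / τ, b_0 = e^{λ_+ τ} (τ λ_+^3 + λ_+^2 + a_0 τ λ_+ - a_0), b_1 = -e^{λ_+ τ} (τ λ_+^2 + 2 λ_+ + a_0 τ), and the quasipolynomial Δ(λ) = λ^2 + a_0 + (b_0 + b_1 λ) e^{-λτ}. Then λ_+ < 0, λ_+ is a real root of Δ of multiplicity at least 3, and every root λ ∈ ℂ of Δ with λ ≠ λ_+ satisfies Re(λ) < λ_+ (the triple root λ_+ is dominant), so the closed-loop system is exponentially stable. -/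
set_option maxHeartbeats 1000000

open MeasureTheory intervalIntegral Complex

lemma key15 (u : ℝ) (hu0 : 0 < u) (hu1 : u < 1) (z : ℂ) (hz : z ≠ 0) (hre : 0 ≤ z.re) :
    z ^ 2 - 2 * (u : ℂ) * z + (4 * (u : ℂ) - 2) -
      ((4 * (u : ℂ) - 2) + (2 * (u : ℂ) - 2) * z) * Complex.exp (-z) ≠ 0 := by
  -- real weight and its derivative
  set g : ℝ → ℝ := fun t => 1 - 2 * u * t + (2 * u - 1) * t ^ 2 with hgdef
  set dg : ℝ → ℝ := fun t => -(2 * u) + (4 * u - 2) * t with hdgdef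
  have hg_hd : ∀ t : ℝ, HasDerivAt g (dg t) t := by
    intro t
    have h1 : HasDerivAt (fun t : ℝ => 1 - 2 * u * t + (2 * u - 1) * t ^ 2)
        (-(2 * u) + (4 * u - 2) * t) t := by
      have := (((hasDerivAt_id t).const_mul (2 * u)).const_sub 1).add
        (((hasDerivAt_pow 2 t)).const_mul (2 * u - 1))
      refine this.congr_deriv ?_
      ring
    exact h1
  have hdg_hd : ∀ t : ℝ, HasDerivAt dg (4 * u - 2) t := by
    intro t
    have := ((hasDerivAt_id t).const_mul (4 * u - 2)).const_add (-(2 * u))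
    refine this.congr_deriv ?_
    ring
  have hdg_neg : ∀ t ∈ Set.Icc (0:ℝ) 1, dg t < 0 := by
    intro t ht
    have h0 := ht.1; have h1' := ht.2
    have h2 : dg t = (1 - t) * (-(2 * u)) + t * (2 * u - 2) := by
      simp only [hdgdef]; ring
    rw [h2]
    rcases lt_or_ge t 1 with h | h
    · have ha : (1 - t) * (-(2 * u)) < 0 :=
        mul_neg_of_pos_of_neg (by linarith) (by linarith)
      have hb : t * (2 * u - 2) ≤ 0 :=
        mul_nonpos_of_nonneg_of_nonpos h0 (by linarith)
      linarith
    · have ht1 : t = 1 := le_antisymm h1' h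
      rw [ht1]; nlinarith
  -- complex integrands
  set f : ℝ → ℂ := fun t => (g t : ℂ) * Complex.exp (-z * t) with hfdef
  set fd : ℝ → ℂ := fun t => (dg t : ℂ) * Complex.exp (-z * t) with hfddef
  have hexp_hd : ∀ t : ℝ, HasDerivAt (fun s : ℝ => Complex.exp (-z * s))
      (Complex.exp (-z * t) * -z) t := by
    intro t
    have hlin : HasDerivAt (fun s : ℝ => -z * (s : ℂ)) (-z) t := by
      simpa using (ofRealCLM.hasDerivAt (x := t)).const_mul (-z)
    simpa using hlin.cexp
  have hfc : Continuous f := by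
    apply Continuous.mul
    · exact (continuous_ofReal.comp (by continuity))
    · exact Complex.continuous_exp.comp (by continuity)
  have hfdc : Continuous fd := by
    apply Continuous.mul
    · exact (continuous_ofReal.comp (by continuity))
    · exact Complex.continuous_exp.comp (by continuity)
  set J : ℂ := ∫ t in (0:ℝ)..1, f t with hJdef
  set K : ℂ := ∫ t in (0:ℝ)..1, fd t with hKdef
  -- Claim 1 : z * J = 1 + K
  have hzJ : z * J = 1 + K := by
    have hF : ∀ t : ℝ, HasDerivAt (fun t : ℝ => -(g t : ℂ) * Complex.exp (-z * t))
        (z * f t - fd t) t := by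
      intro t
      have h := ((hg_hd t).ofReal_comp.neg.mul (hexp_hd t))
      refine h.congr_deriv ?_
      simp only [hfdef, hfddef, Pi.neg_apply]
      push_cast
      ring
    have h1 : ∫ t in (0:ℝ)..1, (z * f t - fd t) =
        (fun t : ℝ => -(g t : ℂ) * Complex.exp (-z * t)) 1 -
        (fun t : ℝ => -(g t : ℂ) * Complex.exp (-z * t)) 0 :=
      intervalIntegral.integral_eq_sub_of_hasDerivAt (fun t _ => hF t)
        (((continuous_const.mul hfc).sub hfdc).intervalIntegrable 0 1)
    have h2 : ∫ t in (0:ℝ)..1, (z * f t - fd t) = z * J - K := by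
      rw [intervalIntegral.integral_sub ((show Continuous fun t => z * f t from continuous_const.mul hfc).intervalIntegrable 0 1)
        (hfdc.intervalIntegrable 0 1)]
      rw [hJdef, hKdef, intervalIntegral.integral_const_mul]
    have hg1 : g 1 = 0 := by simp only [hgdef]; ring
    have hg0 : g 0 = 1 := by simp only [hgdef]; norm_num
    rw [h2] at h1
    simp only [hg1, hg0] at h1
    push_cast at h1
    simp only [mul_zero, Complex.exp_zero] at h1
    linear_combination h1
  -- Claim 2 : z^3 * J equals the quasipolynomial expression
  have hz3 : z ^ 3 ≠ 0 := pow_ne_zero 3 hz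
  set F2 : ℝ → ℂ := fun t =>
    -Complex.exp (-z * t) * ((g t : ℂ) * z ^ 2 + (dg t : ℂ) * z + ((4 * u - 2 : ℝ) : ℂ)) / z ^ 3
    with hF2def
  have hF2 : ∀ t : ℝ, HasDerivAt F2 (f t) t := by
    intro t
    have hA : HasDerivAt (fun t : ℝ => (g t : ℂ) * z ^ 2 + (dg t : ℂ) * z + ((4 * u - 2 : ℝ) : ℂ))
        ((dg t : ℂ) * z ^ 2 + ((4 * u - 2 : ℝ) : ℂ) * z) t := by
      exact (((hg_hd t).ofReal_comp.mul_const (z ^ 2)).add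
        (((hdg_hd t).ofReal_comp).mul_const z)).add_const _
    have h := (((hexp_hd t).neg.mul hA).div_const (z ^ 3))
    refine h.congr_deriv ?_
    simp only [hfdef, Pi.neg_apply]
    field_simp
    ring
  have h3 : J = F2 1 - F2 0 :=
    hJdef ▸ intervalIntegral.integral_eq_sub_of_hasDerivAt (fun t _ => hF2 t)
      (hfc.intervalIntegrable 0 1)
  have hrep : z ^ 2 - 2 * (u : ℂ) * z + (4 * (u : ℂ) - 2) -
      ((4 * (u : ℂ) - 2) + (2 * (u : ℂ) - 2) * z) * Complex.exp (-z) = z ^ 3 * J := by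
    rw [h3, hF2def]
    have hg1 : g 1 = 0 := by simp only [hgdef]; ring
    have hg0 : g 0 = 1 := by simp only [hgdef]; norm_num
    have hdg1 : dg 1 = 2 * u - 2 := by simp only [hdgdef]; ring
    have hdg0 : dg 0 = -(2 * u) := by simp only [hdgdef]; ring
    simp only [hg1, hg0, hdg1, hdg0]
    push_cast
    simp only [mul_one, mul_zero, Complex.exp_zero]
    field_simp
    ring
  -- Claim 3 : ‖K‖ < 1
  have hKlt : ‖K‖ < 1 := by
    have hint1 : (∫ t in (0:ℝ)..1, -dg t) = 1 := by
      have hAnti : ∀ t : ℝ, HasDerivAt (fun t : ℝ => 2 * u * t + (1 - 2 * u) * t ^ 2)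
          (-dg t) t := by
        intro t
        have := ((hasDerivAt_id t).const_mul (2 * u)).add
          (((hasDerivAt_pow 2 t)).const_mul (1 - 2 * u))
        refine this.congr_deriv ?_
        simp only [hdgdef]; push_cast; ring
      have hdgc : Continuous dg := by
        simp only [hdgdef]; fun_prop
      have h7 : (∫ t in (0:ℝ)..1, -dg t) =
          (fun t : ℝ => 2 * u * t + (1 - 2 * u) * t ^ 2) 1 -
          (fun t : ℝ => 2 * u * t + (1 - 2 * u) * t ^ 2) 0 :=
        intervalIntegral.integral_eq_sub_of_hasDerivAt (fun t _ => hAnti t)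
          ((hdgc.neg).intervalIntegrable 0 1)
      rw [h7]; norm_num
    by_cases hK0 : K = 0
    · rw [hK0]; norm_num
    · have hKnorm_pos : (0:ℝ) < ‖K‖ := norm_pos_iff.mpr hK0
      set c : ℂ := (starRingEnd ℂ) K / (‖K‖ : ℂ) with hcdef
      have hcnorm : ‖c‖ = 1 := by
        rw [hcdef, norm_div]
        simp only [Complex.norm_conj, Complex.norm_real, Real.norm_eq_abs,
          _root_.abs_of_nonneg (norm_nonneg K)]
        exact div_self (norm_ne_zero_iff.mpr hK0)
      have hcK : c * K = ((‖K‖ : ℝ) : ℂ) := by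
        rw [hcdef, div_mul_eq_mul_div, mul_comm, Complex.mul_conj]
        rw [Complex.normSq_eq_norm_sq, sq]
        push_cast
        rw [mul_div_assoc, div_self (by exact_mod_cast hKnorm_pos.ne'), mul_one]
      have h4 : c * K = ∫ t in (0:ℝ)..1, c * fd t := by
        rw [hKdef, ← intervalIntegral.integral_const_mul]
      have h6 : (∫ t in (0:ℝ)..1, c * fd t).re = ∫ t in (0:ℝ)..1, (c * fd t).re := by
        rw [intervalIntegral.integral_of_le (by norm_num : (0:ℝ) ≤ 1),
          intervalIntegral.integral_of_le (by norm_num : (0:ℝ) ≤ 1)]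
        rw [← RCLike.re_eq_complex_re,
          ← integral_re ((show Continuous fun t => c * fd t from continuous_const.mul hfdc).integrableOn_Ioc),
          RCLike.re_eq_complex_re]
      have hnormK_eq : ‖K‖ = ∫ t in (0:ℝ)..1, (c * fd t).re := by
        have h5 : (c * K).re = ‖K‖ := by rw [hcK]; simp
        rw [← h5, h4, h6]
      -- pointwise bound
      have hle : ∀ t ∈ Set.Ioc (0:ℝ) 1, (c * fd t).re ≤ -dg t := by
        intro t ht
        have hb : (c * fd t).re ≤ ‖c * fd t‖ := Complex.re_le_norm _
        have hnorm : ‖c * fd t‖ = (-dg t) * Real.exp (-(z.re * t)) := by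
          simp only [hfddef, norm_mul, hcnorm, one_mul]
          rw [Complex.norm_real, Real.norm_eq_abs, Complex.norm_exp]
          rw [abs_of_neg (hdg_neg t ⟨ht.1.le, ht.2⟩)]
          congr 2
          simp [Complex.mul_re]
        have hexp1 : Real.exp (-(z.re * t)) ≤ 1 :=
          Real.exp_le_one_iff.mpr (neg_nonpos.mpr (mul_nonneg hre ht.1.le))
        have hpos : 0 ≤ -dg t := (neg_pos.mpr (hdg_neg t ⟨ht.1.le, ht.2⟩)).le
        calc (c * fd t).re ≤ (-dg t) * Real.exp (-(z.re * t)) := by rw [← hnorm]; exact hb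
          _ ≤ (-dg t) * 1 := mul_le_mul_of_nonneg_left hexp1 hpos
          _ = -dg t := mul_one _
      -- strict at one point
      have hlt_ex : ∃ t0 ∈ Set.Icc (0:ℝ) 1, (c * fd t0).re < -dg t0 := by
        rcases hre.lt_or_eq with hxpos | hx0
        · refine ⟨1, by norm_num, ?_⟩
          have hb : (c * fd 1).re ≤ ‖c * fd 1‖ := Complex.re_le_norm _
          have hnorm : ‖c * fd 1‖ = (-dg 1) * Real.exp (-(z.re * 1)) := by
            simp only [hfddef, norm_mul, hcnorm, one_mul]
            rw [Complex.norm_real, Real.norm_eq_abs, Complex.norm_exp]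
            rw [abs_of_neg (hdg_neg 1 (by norm_num))]
            congr 2
            simp [Complex.mul_re]
          have hdgpos : 0 < -dg 1 := neg_pos.mpr (hdg_neg 1 (by norm_num))
          have hexp1 : Real.exp (-(z.re * 1)) < 1 :=
            Real.exp_lt_one_iff.mpr (by nlinarith)
          calc (c * fd 1).re ≤ (-dg 1) * Real.exp (-(z.re * 1)) := by rw [← hnorm]; exact hb
            _ < (-dg 1) * 1 := by exact mul_lt_mul_of_pos_left hexp1 hdgpos
            _ = -dg 1 := mul_one _
        · -- z.re = 0, so z.im ≠ 0
          have hy : z.im ≠ 0 := by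
            intro h
            exact hz (Complex.ext (hx0.symm) h)
          by_cases hc0 : (c * fd 0).re < -dg 0
          · exact ⟨0, by norm_num, hc0⟩
          · push_neg at hc0
            have hfd0 : fd 0 = ((dg 0 : ℝ) : ℂ) := by
              simp [hfddef]
            have hre0 : (c * fd 0).re = c.re * dg 0 := by
              rw [hfd0]
              simp [Complex.mul_re]
            have hdg0 : dg 0 = -(2 * u) := by simp only [hdgdef]; ring
            have hcre : c.re = -1 := by
              rw [hre0, hdg0] at hc0
              have hcre_le : c.re ≤ 1 := by
                have := Complex.abs_re_le_norm c
                rw [hcnorm] at this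
                cases abs_le.mp this with
                | intro h1 h2 => exact h2
              have hcre_ge : -1 ≤ c.re := by
                have := Complex.abs_re_le_norm c
                rw [hcnorm] at this
                cases abs_le.mp this with
                | intro h1 h2 => exact h1
              nlinarith
            have hcim : c.im = 0 := by
              have h8 : c.re ^ 2 + c.im ^ 2 = 1 := by
                have := Complex.sq_norm c
                rw [hcnorm, Complex.normSq_apply] at this
                nlinarith [this]
              nlinarith [h8, hcre]
            have hc_eq : c = -1 := by
              apply Complex.ext <;> simp [hcre, hcim]
            set t0 : ℝ := min 1 (Real.pi / |z.im|) with ht0def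
            have ht0pos : 0 < t0 :=
              lt_min one_pos (div_pos Real.pi_pos (abs_pos.mpr hy))
            have ht0le1 : t0 ≤ 1 := min_le_left _ _
            have hyt0 : |z.im * t0| ≤ Real.pi := by
              rw [abs_mul, abs_of_pos ht0pos]
              have : t0 ≤ Real.pi / |z.im| := min_le_right _ _
              calc |z.im| * t0 ≤ |z.im| * (Real.pi / |z.im|) :=
                    mul_le_mul_of_nonneg_left this (abs_nonneg _)
                _ = Real.pi := by field_simp
            have hyt0ne : z.im * t0 ≠ 0 := mul_ne_zero hy ht0pos.ne'
            refine ⟨t0, ⟨ht0pos.le, ht0le1⟩, ?_⟩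
            have hre_t0 : (c * fd t0).re = (-dg t0) * Real.cos (z.im * t0) := by
              rw [hc_eq]
              simp only [hfddef]
              have hmul : (-1 : ℂ) * (((dg t0 : ℝ) : ℂ) * Complex.exp (-z * t0)) =
                  ((-dg t0 : ℝ) : ℂ) * Complex.exp (-z * t0) := by push_cast; ring
              rw [hmul, Complex.re_ofReal_mul]
              congr 1
              rw [Complex.exp_re]
              have h9 : (-z * (t0 : ℂ)).re = 0 := by
                simp [Complex.mul_re, ← hx0]
              have h10 : (-z * (t0 : ℂ)).im = -(z.im * t0) := by
                simp [Complex.mul_im, ← hx0]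
              rw [h9, h10, Real.exp_zero, one_mul, Real.cos_neg]
            have hdgt0pos : 0 < -dg t0 := neg_pos.mpr (hdg_neg t0 ⟨ht0pos.le, ht0le1⟩)
            have hcos : Real.cos (z.im * t0) < 1 := by
              rcases (Real.cos_le_one (z.im * t0)).lt_or_eq with h | h
              · exact h
              · exfalso
                have hab := abs_le.mp hyt0
                have hb1 : -(2 * Real.pi) < z.im * t0 := by nlinarith [Real.pi_pos]
                have hb2 : z.im * t0 < 2 * Real.pi := by nlinarith [Real.pi_pos]
                exact hyt0ne ((Real.cos_eq_one_iff_of_lt_of_lt hb1 hb2).mp h)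
            rw [hre_t0]
            calc (-dg t0) * Real.cos (z.im * t0) < (-dg t0) * 1 :=
                  mul_lt_mul_of_pos_left hcos hdgt0pos
              _ = -dg t0 := mul_one _
      rw [hnormK_eq]
      calc (∫ t in (0:ℝ)..1, (c * fd t).re) < ∫ t in (0:ℝ)..1, -dg t := by
            apply intervalIntegral.integral_lt_integral_of_continuousOn_of_le_of_exists_lt
              zero_lt_one
            · exact (Complex.continuous_re.comp (continuous_const.mul hfdc)).continuousOn
            · exact ((by simp only [hdgdef]; fun_prop : Continuous dg)).neg.continuousOn
            · exact hle
            · exact hlt_ex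
        _ = 1 := hint1
  -- conclusion
  have h1K : (1 : ℂ) + K ≠ 0 := by
    intro h
    have : K = -1 := by linear_combination h
    rw [this] at hKlt
    simp at hKlt
  rw [hrep]
  have : z ^ 3 * J = z ^ 2 * (z * J) := by ring
  rw [this, hzJ]
  exact mul_ne_zero (pow_ne_zero 2 hz) h1K

/-- inverted pendulum with delayed PD control, dominant triple root:
for `a₀ < 0` and `0 < τ < √(-2/a₀)`, with `λ₊ = (-2 + √(2 - a₀τ²))/τ` and gains
`b₀ = e^{λ₊τ}(τλ₊³ + λ₊² + a₀τλ₊ - a₀)`, `b₁ = -e^{λ₊τ}(τλ₊² + 2λ₊ + a₀τ)`, the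
quasipolynomial `Δ(λ) = λ² + a₀ + (b₀ + b₁λ)e^{-λτ}` has `λ₊ < 0` as a real root of
multiplicity at least 3, and every other root satisfies `Re(λ) < λ₊`. -/
theorem stmt_15 (a0 τ : ℝ) (ha0 : a0 < 0) (hτ0 : 0 < τ) (hτ : τ < Real.sqrt (-2 / a0))
    (lamp b0 b1 : ℝ)
    (hlamp : lamp = (-2 + Real.sqrt (2 - a0 * τ ^ 2)) / τ)
    (hb0 : b0 = Real.exp (lamp * τ) * (τ * lamp ^ 3 + lamp ^ 2 + a0 * τ * lamp - a0))
    (hb1 : b1 = -Real.exp (lamp * τ) * (τ * lamp ^ 2 + 2 * lamp + a0 * τ))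
    (Δ : ℂ → ℂ)
    (hΔ : ∀ lam : ℂ, Δ lam =
      lam ^ 2 + (a0 : ℂ) + ((b0 : ℂ) + (b1 : ℂ) * lam) * Complex.exp (-lam * (τ : ℂ))) :
    lamp < 0 ∧ (∀ j < 3, iteratedDeriv j Δ (lamp : ℂ) = 0) ∧
    (∀ lam : ℂ, Δ lam = 0 → lam ≠ (lamp : ℂ) → lam.re < lamp) := by
  have hτne : τ ≠ 0 := hτ0.ne'
  set s : ℝ := Real.sqrt (2 - a0 * τ ^ 2) with hsdef
  have hpos : (0:ℝ) < 2 - a0 * τ ^ 2 := by nlinarith [sq_nonneg τ]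
  have hs2 : s ^ 2 = 2 - a0 * τ ^ 2 := Real.sq_sqrt hpos.le
  have hs0 : 0 < s := Real.sqrt_pos.mpr hpos
  have hτ2 : τ ^ 2 < -2 / a0 := (Real.lt_sqrt hτ0.le).mp hτ
  have ha0τ : -2 < a0 * τ ^ 2 := by
    have h := mul_lt_mul_of_neg_left hτ2 ha0
    have h2 : a0 * (-2 / a0) = -2 := by
      rw [mul_comm]; exact div_mul_cancel₀ (-2) ha0.ne
    linarith [h, h2]
  have ha0τneg : a0 * τ ^ 2 < 0 := by nlinarith [sq_nonneg τ, pow_pos hτ0 2]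
  have hs_lt2 : s < 2 := by nlinarith
  have hs_gt1 : 1 < s := by nlinarith
  have hlτ : lamp * τ = -2 + s := by rw [hlamp]; field_simp
  have hlamp_neg : lamp < 0 := by
    rw [hlamp]; exact div_neg_of_neg_of_pos (by linarith) hτ0
  -- quadratic identity (from the sqrt)
  have hquad : τ ^ 2 * lamp ^ 2 + 4 * (τ * lamp) + a0 * τ ^ 2 = -2 := by
    linear_combination (lamp * τ + s + 2) * hlτ + hs2
  -- coerced gain identities
  have hb0c : (b0 : ℂ) = Complex.exp ((lamp : ℂ) * (τ : ℂ)) *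
      ((τ:ℂ) * (lamp:ℂ) ^ 3 + (lamp:ℂ) ^ 2 + (a0:ℂ) * (τ:ℂ) * (lamp:ℂ) - (a0:ℂ)) := by
    rw [hb0]
    push_cast [Complex.ofReal_exp]
    ring
  have hb1c : (b1 : ℂ) = Complex.exp ((lamp : ℂ) * (τ : ℂ)) *
      (-((τ:ℂ) * (lamp:ℂ) ^ 2 + 2 * (lamp:ℂ) + (a0:ℂ) * (τ:ℂ))) := by
    rw [hb1]
    push_cast [Complex.ofReal_exp]
    ring
  have hXE : Complex.exp ((lamp : ℂ) * (τ : ℂ)) * Complex.exp (-(lamp : ℂ) * (τ : ℂ)) = 1 := by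
    rw [← Complex.exp_add, show (lamp:ℂ) * τ + -(lamp:ℂ) * τ = 0 by ring, Complex.exp_zero]
  have hquadc : (τ:ℂ) ^ 2 * (lamp:ℂ) ^ 2 + 4 * ((τ:ℂ) * (lamp:ℂ)) + (a0:ℂ) * (τ:ℂ) ^ 2
      = -2 := by exact_mod_cast congrArg (fun x : ℝ => (x : ℂ)) hquad
  -- derivatives of Δ
  have hexpd : ∀ w : ℂ, HasDerivAt (fun w : ℂ => Complex.exp (-w * (τ:ℂ)))
      (Complex.exp (-w * (τ:ℂ)) * (-1 * (τ:ℂ))) w :=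
    fun w => ((hasDerivAt_id w).neg.mul_const (τ:ℂ)).cexp
  have hD1 : deriv Δ = fun w : ℂ =>
      2 * w + ((b1:ℂ) - (τ:ℂ) * ((b0:ℂ) + (b1:ℂ) * w)) * Complex.exp (-w * (τ:ℂ)) := by
    funext w
    have h : HasDerivAt Δ
        (2 * w + ((b1:ℂ) - (τ:ℂ) * ((b0:ℂ) + (b1:ℂ) * w)) * Complex.exp (-w * (τ:ℂ))) w := by
      rw [funext hΔ]
      have h1 : HasDerivAt (fun w : ℂ => w ^ 2) (2 * w) w := by
        simpa using hasDerivAt_pow 2 w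
      have h2 : HasDerivAt (fun w : ℂ => (b0:ℂ) + (b1:ℂ) * w) (b1:ℂ) w := by
        simpa using ((hasDerivAt_id w).const_mul (b1:ℂ)).const_add (b0:ℂ)
      have h3 := (h1.add_const (a0:ℂ)).add (h2.mul (hexpd w))
      refine h3.congr_deriv ?_
      ring
    exact h.deriv
  have hD2 : deriv (deriv Δ) = fun w : ℂ =>
      2 + (-2 * (τ:ℂ) * (b1:ℂ) + (τ:ℂ) ^ 2 * ((b0:ℂ) + (b1:ℂ) * w)) *
        Complex.exp (-w * (τ:ℂ)) := by
    funext w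
    have h : HasDerivAt (deriv Δ)
        (2 + (-2 * (τ:ℂ) * (b1:ℂ) + (τ:ℂ) ^ 2 * ((b0:ℂ) + (b1:ℂ) * w)) *
          Complex.exp (-w * (τ:ℂ))) w := by
      rw [hD1]
      have h1 : HasDerivAt (fun w : ℂ => 2 * w) 2 w := by
        simpa using (hasDerivAt_id w).const_mul (2:ℂ)
      have h2 : HasDerivAt (fun w : ℂ => (b1:ℂ) - (τ:ℂ) * ((b0:ℂ) + (b1:ℂ) * w))
          (-((τ:ℂ) * (b1:ℂ))) w := by
        simpa using (((((hasDerivAt_id w).const_mul (b1:ℂ)).const_add (b0:ℂ)).const_mul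
          (τ:ℂ)).const_sub (b1:ℂ))
      have h3 := h1.add (h2.mul (hexpd w))
      refine h3.congr_deriv ?_
      ring
    exact h.deriv
  refine ⟨hlamp_neg, ?_, ?_⟩
  · intro j hj
    interval_cases j
    · rw [iteratedDeriv_zero, hΔ]
      rw [hb0c, hb1c]
      linear_combination (Complex.exp (-(lamp:ℂ) * (τ:ℂ))) * hb0c * 0 +
        (-((lamp:ℂ)^2 + (a0:ℂ))) * hXE
    · rw [iteratedDeriv_one, hD1]
      simp only
      rw [hb0c, hb1c]
      linear_combination (-2 * (lamp:ℂ)) * hXE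
    · rw [show (2:ℕ) = 1 + 1 from rfl, iteratedDeriv_succ, iteratedDeriv_one, hD2]
      simp only
      rw [hb0c, hb1c]
      linear_combination (-2 : ℂ) * hXE +
        (Complex.exp (-(lamp:ℂ) * (τ:ℂ)) * Complex.exp ((lamp:ℂ) * (τ:ℂ))) * hquadc
  · intro lam hroot hne
    by_contra hge
    push_neg at hge
    -- set-up for the key lemma
    have hu0' : (0:ℝ) < 2 - s := by linarith
    have hu1' : 2 - s < 1 := by linarith
    have hzne : ((τ:ℂ) * (lam - (lamp:ℂ))) ≠ 0 :=
      mul_ne_zero (Complex.ofReal_ne_zero.mpr hτne) (sub_ne_zero.mpr hne)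
    have hzre : 0 ≤ ((τ:ℂ) * (lam - (lamp:ℂ))).re := by
      rw [Complex.re_ofReal_mul]
      apply mul_nonneg hτ0.le
      simp only [Complex.sub_re, Complex.ofReal_re]
      linarith
    have hkey := key15 (2 - s) hu0' hu1' ((τ:ℂ) * (lam - (lamp:ℂ))) hzne hzre
    apply hkey
    have hsplit : Complex.exp (-lam * (τ:ℂ)) =
        Complex.exp (-(lamp:ℂ) * (τ:ℂ)) * Complex.exp (-((τ:ℂ) * (lam - (lamp:ℂ)))) := by
      rw [← Complex.exp_add]
      congr 1
      ring
    have h4u : 4 * (2 - (s:ℂ)) - 2 = (τ:ℂ) ^ 2 * ((lamp:ℂ) ^ 2 + (a0:ℂ)) := by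
      have hr : 4 * (2 - s) - 2 = τ ^ 2 * (lamp ^ 2 + a0) := by
        linear_combination (-(lamp * τ + s - 2)) * hlτ - hs2
      exact_mod_cast congrArg (fun x : ℝ => (x : ℂ)) hr
    have h2u : 2 * (2 - (s:ℂ)) - 2 = (τ:ℂ) * ((τ:ℂ) * (lamp:ℂ) ^ 2 + 2 * (lamp:ℂ) +
        (a0:ℂ) * (τ:ℂ)) := by
      have hr : 2 * (2 - s) - 2 = τ * (τ * lamp ^ 2 + 2 * lamp + a0 * τ) := by
        linear_combination (-(lamp * τ + s)) * hlτ - hs2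
      exact_mod_cast congrArg (fun x : ℝ => (x : ℂ)) hr
    have huc : (2 - (s:ℂ)) = -((lamp:ℂ) * (τ:ℂ)) := by
      have hr : 2 - s = -(lamp * τ) := by linear_combination hlτ
      exact_mod_cast congrArg (fun x : ℝ => (x : ℂ)) hr
    have hGeq : ((τ:ℂ) * (lam - (lamp:ℂ))) ^ 2 -
        2 * ((2 - s : ℝ) : ℂ) * ((τ:ℂ) * (lam - (lamp:ℂ))) + (4 * ((2 - s : ℝ) : ℂ) - 2) -
        ((4 * ((2 - s : ℝ) : ℂ) - 2) + (2 * ((2 - s : ℝ) : ℂ) - 2) * ((τ:ℂ) * (lam - (lamp:ℂ)))) *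
          Complex.exp (-((τ:ℂ) * (lam - (lamp:ℂ)))) = (τ:ℂ) ^ 2 * Δ lam := by
      rw [hΔ lam, hsplit, hb0c, hb1c]
      push_cast
      set Ez := Complex.exp (-((τ:ℂ) * (lam - (lamp:ℂ)))) with hEzdef
      set X := Complex.exp ((lamp:ℂ) * (τ:ℂ)) with hXdef
      set E := Complex.exp (-(lamp:ℂ) * (τ:ℂ)) with hEdef
      linear_combination (1 - Ez) * h4u + (-((τ:ℂ) * (lam - (lamp:ℂ))) * Ez) * h2u +
        (-2 * ((τ:ℂ) * (lam - (lamp:ℂ)))) * huc +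
        (-(τ:ℂ)^2 * (((τ:ℂ) * (lamp:ℂ) ^ 3 + (lamp:ℂ) ^ 2 + (a0:ℂ) * (τ:ℂ) * (lamp:ℂ) - (a0:ℂ)) +
          (-((τ:ℂ) * (lamp:ℂ) ^ 2 + 2 * (lamp:ℂ) + (a0:ℂ) * (τ:ℂ))) * lam) * Ez) * hXE
    rw [hGeq, hroot, mul_zero]
end
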